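/- Fix t ∈ T and let μ_t be the pushforward of μ under f ↦ f(t), restricted to (0,∞), with tail function μ̄_t(x) = μ_t([x,∞)). The following are equivalent: (i) Φ_{{t}}^+(C_0) = 1 almost surely; (ii) μ̄_t(0^+) = +∞ and μ̄_t is continuous on (0,∞); (iii) the distribution of η(t) has no atom. Here P(η(t) < x) = exp(−μ̄_t(x)) for x > 0. -/

import Mathlib

open MeasureTheory Set ENNReal

noncomputable section

/-- The set of atoms of a point measure. -/
def atomsOf {α : Type*} [MeasurableSpace α] (M : Measure α) : Set α := {f | M {f} ≠ 0}

/-- Pointwise maximum function `max(M)(t) = max {f t : f atom of M}`. -/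
def maxM {T : Type*} [TopologicalSpace T] [MeasurableSpace C(T, ℝ)]
    (M : Measure C(T, ℝ)) (t : T) : ℝ :=
  sSup ((fun f : C(T, ℝ) => f t) '' atomsOf M)

/-- `M` belongs to `M_p(C_0)`: a point measure on nonnegative nonzero continuous
functions, with finitely many atoms (with multiplicity) of norm `> ε` for every `ε > 0`. -/
def IsMp {T : Type*} [MetricSpace T] [CompactSpace T] [MeasurableSpace C(T, ℝ)]
    (M : Measure C(T, ℝ)) : Prop :=
  ∃ (c : ℕ → ℕ) (φ : ℕ → C(T, ℝ)),
    M = Measure.sum (fun n => (c n : ℝ≥0∞) • Measure.dirac (φ n)) ∧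
    (∀ n, c n ≠ 0 → 0 ≤ φ n ∧ φ n ≠ 0) ∧
    (∀ ε : ℝ, 0 < ε → {n | c n ≠ 0 ∧ ε < ‖φ n‖}.Finite)

/-- `Φ` is a Poisson random measure on `α` with intensity `μ`, under `P`. -/
def IsPoissonPM {Ω : Type*} [MeasurableSpace Ω] {α : Type*} [MeasurableSpace α]
    (P : Measure Ω) (Φ : Ω → Measure α) (μ : Measure α) : Prop :=
  (∀ A : Set α, MeasurableSet A → Measurable fun ω => Φ ω A) ∧
  (∀ A : Set α, MeasurableSet A → μ A ≠ ⊤ → ∀ n : ℕ,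
      P {ω | Φ ω A = n} =
        ENNReal.ofReal (Real.exp (-(μ A).toReal) * (μ A).toReal ^ n / n.factorial)) ∧
  ∀ (m : ℕ) (A : Fin m → Set α), (∀ i, MeasurableSet (A i)) →
      Pairwise (Function.onFun Disjoint A) →
      ProbabilityTheory.iIndepFun (fun i ω => Φ ω (A i)) P

/-- `exp(-x)` for extended nonnegative `x`. -/
def Eexp (x : ℝ≥0∞) : ℝ≥0∞ :=
  if x = ⊤ then 0 else ENNReal.ofReal (Real.exp (-x.toReal))

set_option linter.unusedSectionVars false
set_option maxHeartbeats 1000000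

section Helpers

variable {T : Type*} [MetricSpace T] [CompactSpace T]
  [MeasurableSpace C(T, ℝ)] [BorelSpace C(T, ℝ)]

lemma meas_eval (t : T) : Measurable fun f : C(T, ℝ) => f t :=
  (continuous_eval_const t).measurable

lemma measSet_S (t : T) (x : ℝ) : MeasurableSet {f : C(T, ℝ) | x ≤ f t} :=
  meas_eval t measurableSet_Ici

lemma measSet_G (t : T) (x : ℝ) : MeasurableSet {f : C(T, ℝ) | x < f t} :=
  meas_eval t measurableSet_Ioi

lemma measSet_D (t : T) (x : ℝ) : MeasurableSet {f : C(T, ℝ) | f t = x} :=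
  meas_eval t (measurableSet_singleton x)

lemma pm_apply {M : Measure C(T, ℝ)} {c : ℕ → ℕ} {φ : ℕ → C(T, ℝ)}
    (hsum : M = Measure.sum fun n => (c n : ℝ≥0∞) • Measure.dirac (φ n))
    {A : Set C(T, ℝ)} (hA : MeasurableSet A) :
    M A = ∑' n, A.indicator (fun _ => (c n : ℝ≥0∞)) (φ n) := by
  rw [hsum, Measure.sum_apply _ hA]
  congr 1; funext n
  rw [Measure.smul_apply, Measure.dirac_apply' _ hA]
  by_cases h : φ n ∈ A
  · simp [indicator_of_mem h]
  · simp [indicator_of_notMem h]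

lemma pm_zero_iff {M : Measure C(T, ℝ)} {c : ℕ → ℕ} {φ : ℕ → C(T, ℝ)}
    (hsum : M = Measure.sum fun n => (c n : ℝ≥0∞) • Measure.dirac (φ n))
    {A : Set C(T, ℝ)} (hA : MeasurableSet A) :
    M A = 0 ↔ ∀ n, c n ≠ 0 → φ n ∉ A := by
  rw [pm_apply hsum hA, ENNReal.tsum_eq_zero]
  constructor
  · intro h n hc hm
    have := h n
    rw [indicator_of_mem hm] at this
    exact hc (by exact_mod_cast this)
  · intro h n
    by_cases hm : φ n ∈ A
    · rw [indicator_of_mem hm]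
      by_contra hc
      exact h n (by exact_mod_cast hc) hm
    · rw [indicator_of_notMem hm]

lemma pm_le_of_mem {M : Measure C(T, ℝ)} {c : ℕ → ℕ} {φ : ℕ → C(T, ℝ)}
    (hsum : M = Measure.sum fun n => (c n : ℝ≥0∞) • Measure.dirac (φ n))
    {A : Set C(T, ℝ)} (hA : MeasurableSet A) {n : ℕ} (hn : φ n ∈ A) :
    (c n : ℝ≥0∞) ≤ M A := by
  rw [pm_apply hsum hA]
  have := ENNReal.le_tsum (f := fun n => A.indicator (fun _ => (c n : ℝ≥0∞)) (φ n)) n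
  rwa [indicator_of_mem hn] at this

lemma atomsOf_eq {M : Measure C(T, ℝ)} {c : ℕ → ℕ} {φ : ℕ → C(T, ℝ)}
    (hsum : M = Measure.sum fun n => (c n : ℝ≥0∞) • Measure.dirac (φ n)) :
    atomsOf M = {f | ∃ n, c n ≠ 0 ∧ φ n = f} := by
  ext f
  have hs : MeasurableSet ({f} : Set C(T, ℝ)) :=
    (isClosed_singleton : IsClosed {f}).measurableSet
  simp only [atomsOf, mem_setOf_eq, ne_eq]
  constructor
  · intro h
    by_contra hno
    push_neg at hno
    exact h ((pm_zero_iff hsum hs).2 fun n hc => by simp [hno n hc])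
  · rintro ⟨n, hc, rfl⟩ h0
    have := pm_le_of_mem hsum hs (n := n) (mem_singleton _)
    rw [h0, le_zero_iff] at this
    exact hc (by exact_mod_cast this)

/-- `M A = 0` iff no atom lies in `A`. -/
lemma pm_zero_iff_atoms {M : Measure C(T, ℝ)} {c : ℕ → ℕ} {φ : ℕ → C(T, ℝ)}
    (hsum : M = Measure.sum fun n => (c n : ℝ≥0∞) • Measure.dirac (φ n))
    {A : Set C(T, ℝ)} (hA : MeasurableSet A) :
    M A = 0 ↔ ∀ f ∈ atomsOf M, f ∉ A := by
  rw [pm_zero_iff hsum hA, atomsOf_eq hsum]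
  constructor
  · rintro h f ⟨n, hc, rfl⟩
    exact h n hc
  · intro h n hc
    exact h (φ n) ⟨n, hc, rfl⟩

end Helpers

set_option linter.unusedSectionVars false

section Helpers2

variable {T : Type*} [MetricSpace T] [CompactSpace T]
  [MeasurableSpace C(T, ℝ)] [BorelSpace C(T, ℝ)] {M : Measure C(T, ℝ)} {t : T}

lemma eval_le_norm (f : C(T, ℝ)) (t : T) : f t ≤ ‖f‖ :=
  (le_abs_self _).trans ((Real.norm_eq_abs (f t)) ▸ f.norm_coe_le_norm t)

lemma atom_nonneg (hM : IsMp M) {f : C(T, ℝ)} (hf : f ∈ atomsOf M) (t : T) :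
    0 ≤ f t := by
  obtain ⟨c, φ, hsum, hpos, hfin⟩ := hM
  rw [atomsOf_eq hsum] at hf
  obtain ⟨n, hc, rfl⟩ := hf
  exact (ContinuousMap.le_def.1 (hpos n hc).1) t

lemma V_inter_finite (hM : IsMp M) (t : T) {ε : ℝ} (hε : 0 < ε) :
    (((fun f : C(T, ℝ) => f t) '' atomsOf M) ∩ Ioi ε).Finite := by
  obtain ⟨c, φ, hsum, hpos, hfin⟩ := hM
  apply ((hfin ε hε).image fun n => φ n t).subset
  rintro v ⟨⟨f, hf, rfl⟩, hv⟩
  rw [atomsOf_eq hsum] at hf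
  obtain ⟨n, hc, rfl⟩ := hf
  exact ⟨n, ⟨hc, lt_of_lt_of_le hv (eval_le_norm _ t)⟩, rfl⟩

lemma bddAbove_V (hM : IsMp M) (t : T) :
    BddAbove ((fun f : C(T, ℝ) => f t) '' atomsOf M) := by
  have : ((fun f : C(T, ℝ) => f t) '' atomsOf M) ⊆
      Iic 1 ∪ (((fun f : C(T, ℝ) => f t) '' atomsOf M) ∩ Ioi 1) := by
    intro v hv
    rcases le_or_gt v 1 with h | h
    · exact Or.inl h
    · exact Or.inr ⟨hv, h⟩
  exact (bddAbove_Iic.union (V_inter_finite hM t one_pos).bddAbove).mono this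

lemma atom_le_maxM (hM : IsMp M) {f : C(T, ℝ)} (hf : f ∈ atomsOf M) (t : T) :
    f t ≤ maxM M t :=
  le_csSup (bddAbove_V hM t) (mem_image_of_mem _ hf)

lemma maxM_nonneg (hM : IsMp M) (t : T) : 0 ≤ maxM M t :=
  Real.sSup_nonneg (by rintro v ⟨f, hf, rfl⟩; exact atom_nonneg hM hf t)

/-- If all atom values at `t` are `< x` (with `x > 0`) then `maxM M t < x`. -/
lemma maxM_lt_of_forall (hM : IsMp M) (t : T) {x : ℝ} (hx : 0 < x)
    (h : ∀ f ∈ atomsOf M, f t < x) : maxM M t < x := by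
  set V := (fun f : C(T, ℝ) => f t) '' atomsOf M with hV
  have hW : (V ∩ Ioi (x / 2)).Finite := V_inter_finite hM t (by linarith)
  have hvx : ∀ v ∈ V, v < x := by rintro v ⟨f, hf, rfl⟩; exact h f hf
  rcases (V ∩ Ioi (x / 2)).eq_empty_or_nonempty with he | hne
  · have : sSup V ≤ x / 2 := by
      apply Real.sSup_le _ (by linarith)
      intro v hv
      by_contra hlt
      exact (eq_empty_iff_forall_notMem.1 he) v ⟨hv, by push_neg at hlt; exact hlt⟩
    calc sSup V ≤ x / 2 := this
    _ < x := by linarith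
  · set b := sSup (V ∩ Ioi (x / 2)) with hb
    have hbmem : b ∈ V ∩ Ioi (x / 2) := hne.csSup_mem hW
    have hbx : b < x := hvx b hbmem.1
    have : sSup V ≤ max (x / 2) b := by
      apply Real.sSup_le _ (le_max_of_le_left (by linarith : (0:ℝ) ≤ x / 2))
      intro v hv
      rcases le_or_gt v (x / 2) with h' | h'
      · exact le_max_of_le_left h'
      · exact le_max_of_le_right (le_csSup hW.bddAbove ⟨hv, h'⟩)
    exact lt_of_le_of_lt this (max_lt (by linarith) hbx)

lemma maxM_lt_iff (hM : IsMp M) (t : T) {x : ℝ} (hx : 0 < x) :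
    M {f : C(T, ℝ) | x ≤ f t} = 0 ↔ maxM M t < x := by
  obtain ⟨c, φ, hsum, hpos, hfin⟩ := id hM
  rw [pm_zero_iff_atoms hsum (measSet_S t x)]
  constructor
  · intro h
    apply maxM_lt_of_forall hM t hx
    intro f hf
    by_contra hge
    exact h f hf (by push_neg at hge; exact hge)
  · intro hlt f hf hmem
    exact absurd (lt_of_le_of_lt (le_trans hmem (atom_le_maxM hM hf t)) hlt) (lt_irrefl x)

lemma maxM_attained (hM : IsMp M) (t : T) (hs : 0 < maxM M t) :
    ∃ f ∈ atomsOf M, f t = maxM M t := by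
  by_contra h
  push_neg at h
  have : ∀ f ∈ atomsOf M, f t < maxM M t := fun f hf =>
    lt_of_le_of_ne (atom_le_maxM hM hf t) (h f hf)
  exact absurd (maxM_lt_of_forall hM t hs this) (lt_irrefl _)

lemma maxM_eq_zero_iff (hM : IsMp M) (t : T) :
    maxM M t = 0 ↔ M {f : C(T, ℝ) | 0 < f t} = 0 := by
  obtain ⟨c, φ, hsum, hpos, hfin⟩ := id hM
  rw [pm_zero_iff_atoms hsum (measSet_G t 0)]
  constructor
  · intro h f hf hmem
    have := atom_le_maxM hM hf t
    rw [h] at this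
    exact absurd hmem (not_lt.2 this)
  · intro h
    have hle : maxM M t ≤ 0 := by
      apply Real.sSup_le _ le_rfl
      rintro v ⟨f, hf, rfl⟩
      by_contra hv
      exact h f hf (by push_neg at hv; exact hv)
    exact le_antisymm hle (maxM_nonneg hM t)

/-- No atom strictly above the max. -/
lemma pm_G_maxM_zero (hM : IsMp M) (t : T) :
    M {f : C(T, ℝ) | maxM M t < f t} = 0 := by
  obtain ⟨c, φ, hsum, hpos, hfin⟩ := id hM
  rw [pm_zero_iff_atoms hsum (measSet_G t _)]
  intro f hf hmem
  exact absurd hmem (not_lt.2 (atom_le_maxM hM hf t))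

/-- `ℕ∞`-valued tsum trichotomy. -/
lemma tsum_nat_trichotomy (g : ℕ → ℕ) (h0 : (∑' n, (g n : ℝ≥0∞)) ≠ 0)
    (h1 : (∑' n, (g n : ℝ≥0∞)) ≠ 1) : 2 ≤ ∑' n, (g n : ℝ≥0∞) := by
  have hex : ∃ m, g m ≠ 0 := by
    by_contra h
    push_neg at h
    exact h0 (by simp [h])
  obtain ⟨m, hm⟩ := hex
  rcases Nat.lt_or_ge (g m) 2 with h2 | h2
  · have hgm : g m = 1 := by omega
    have hex2 : ∃ k, k ≠ m ∧ g k ≠ 0 := by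
      by_contra h
      push_neg at h
      apply h1
      rw [tsum_eq_single m fun k hk => by simp [h k hk]]
      exact_mod_cast hgm
    obtain ⟨k, hkm, hk⟩ := hex2
    have : (({m, k} : Finset ℕ).sum fun n => (g n : ℝ≥0∞)) ≤ ∑' n, (g n : ℝ≥0∞) :=
      ENNReal.sum_le_tsum _
    rw [Finset.sum_pair (Ne.symm hkm)] at this
    refine le_trans ?_ this
    have : (1 : ℝ≥0∞) ≤ g k := by
      exact_mod_cast Nat.one_le_iff_ne_zero.2 hk
    calc (2 : ℝ≥0∞) = 1 + 1 := by norm_num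
    _ ≤ (g m : ℝ≥0∞) + g k := add_le_add (by exact_mod_cast hgm.ge) this
  · calc (2 : ℝ≥0∞) ≤ (g m : ℝ≥0∞) := by exact_mod_cast h2
    _ ≤ ∑' n, (g n : ℝ≥0∞) := ENNReal.le_tsum m

/-- Values of a point measure: trichotomy. -/
lemma pm_value_trichotomy (hM : IsMp M) {A : Set C(T, ℝ)} (hA : MeasurableSet A)
    (h0 : M A ≠ 0) (h1 : M A ≠ 1) : 2 ≤ M A := by
  obtain ⟨c, φ, hsum, hpos, hfin⟩ := hM
  classical
  rw [pm_apply hsum hA] at h0 h1 ⊢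
  have : ∀ n, A.indicator (fun _ => (c n : ℝ≥0∞)) (φ n) =
      ((if φ n ∈ A then c n else 0 : ℕ) : ℝ≥0∞) := by
    intro n
    by_cases h : φ n ∈ A <;> simp [h]
  simp only [this] at h0 h1 ⊢
  exact tsum_nat_trichotomy _ h0 h1

end Helpers2

section Helpers3

variable {T : Type*} [MetricSpace T] [CompactSpace T]
  [MeasurableSpace C(T, ℝ)] [BorelSpace C(T, ℝ)]
  {μ : Measure C(T, ℝ)} {t : T}

lemma mu_S_ne_top (hμ : ∀ ε : ℝ, 0 < ε → μ {f : C(T, ℝ) | ε < ‖f‖} ≠ ⊤)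
    {x : ℝ} (hx : 0 < x) : μ {f : C(T, ℝ) | x ≤ f t} ≠ ⊤ := by
  refine ne_top_of_le_ne_top (hμ (x / 2) (by linarith)) (measure_mono ?_)
  intro f hf
  exact lt_of_lt_of_le (by linarith) (le_trans hf (eval_le_norm f t))

lemma S_decomp (x : ℝ) :
    μ {f : C(T, ℝ) | x ≤ f t} = μ {f : C(T, ℝ) | f t = x} + μ {f : C(T, ℝ) | x < f t} := by
  have hset : {f : C(T, ℝ) | x ≤ f t} = {f : C(T, ℝ) | f t = x} ∪ {f : C(T, ℝ) | x < f t} := by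
    ext f
    simp only [mem_setOf_eq, mem_union]
    constructor
    · intro h; rcases eq_or_lt_of_le h with h | h; exacts [Or.inl h.symm, Or.inr h]
    · rintro (h | h); exacts [h.ge, h.le]
  rw [hset, measure_union _ (measSet_G t x)]
  intro s hs hs' f hf
  exact absurd ((hs hf : f t = x) ▸ (hs' hf : x < f t)) (lt_irrefl x)

lemma antitone_mu_S : Antitone (fun y => μ {f : C(T, ℝ) | y ≤ f t}) := by
  intro a b hab
  exact measure_mono fun f hf => le_trans hab hf

/-- `μ(S(x + 1/(n+1))) → μ(G x)`. -/
lemma tendsto_mu_S_seq (x : ℝ) :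
    Filter.Tendsto (fun n : ℕ => μ {f : C(T, ℝ) | x + 1 / (n + 1) ≤ f t}) Filter.atTop
      (nhds (μ {f : C(T, ℝ) | x < f t})) := by
  have hmono : Monotone fun n : ℕ => {f : C(T, ℝ) | x + 1 / (n + 1) ≤ f t} := by
    intro n m hnm f hf
    refine le_trans (add_le_add_right ?_ x) hf
    apply one_div_le_one_div_of_le (by positivity)
    exact_mod_cast Nat.add_le_add_right hnm 1
  have hU : (⋃ n : ℕ, {f : C(T, ℝ) | x + 1 / (n + 1) ≤ f t}) = {f : C(T, ℝ) | x < f t} := by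
    ext f
    simp only [mem_iUnion, mem_setOf_eq]
    constructor
    · rintro ⟨n, hn⟩
      have : (0:ℝ) < 1 / (n + 1) := by positivity
      linarith
    · intro h
      obtain ⟨n, hn⟩ := exists_nat_one_div_lt (sub_pos.2 h)
      exact ⟨n, by push_cast at hn ⊢; linarith⟩
  have := tendsto_measure_iUnion_atTop (μ := μ) hmono
  rwa [hU] at this

/-- Right limit of `μbar` at any `x`: equals `μ (G x)`. -/
lemma tendsto_mu_S_right (x : ℝ) :
    Filter.Tendsto (fun y => μ {f : C(T, ℝ) | y ≤ f t}) (nhdsWithin x (Ioi x))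
      (nhds (μ {f : C(T, ℝ) | x < f t})) := by
  have h1 := antitone_mu_S (μ := μ) (t := t) |>.tendsto_nhdsGT x
  have heq : sSup ((fun y => μ {f : C(T, ℝ) | y ≤ f t}) '' Ioi x)
      = μ {f : C(T, ℝ) | x < f t} := by
    apply le_antisymm
    · apply sSup_le
      rintro v ⟨y, hy, rfl⟩
      exact measure_mono fun f (hf : y ≤ f t) => show x < f t from lt_of_lt_of_le hy hf
    · refine le_of_tendsto' (tendsto_mu_S_seq x) fun n => le_sSup ?_
      exact ⟨x + 1 / (n + 1), by
        simp only [mem_Ioi]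
        have : (0:ℝ) < 1 / ((n:ℝ) + 1) := by positivity
        linarith, rfl⟩
  rwa [heq] at h1

/-- Left limit of `μbar` at `x > 0`: equals `μ (S x)`. -/
lemma tendsto_mu_S_left (hμ : ∀ ε : ℝ, 0 < ε → μ {f : C(T, ℝ) | ε < ‖f‖} ≠ ⊤)
    {x : ℝ} (hx : 0 < x) :
    Filter.Tendsto (fun y => μ {f : C(T, ℝ) | y ≤ f t}) (nhdsWithin x (Iio x))
      (nhds (μ {f : C(T, ℝ) | x ≤ f t})) := by
  have h1 := antitone_mu_S (μ := μ) (t := t) |>.tendsto_nhdsLT x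
  have hy : ∀ n : ℕ, x / 2 ≤ x - x / 2 / (n + 1) := by
    intro n
    have h2 : x / 2 / (n + 1) ≤ x / 2 := by
      apply div_le_self (by linarith)
      exact_mod_cast Nat.le_add_left 1 n
    linarith
  have hanti : Antitone fun n : ℕ => {f : C(T, ℝ) | x - x / 2 / (n + 1) ≤ f t} := by
    intro n m hnm f hf
    refine le_trans (sub_le_sub_left ?_ x) hf
    apply div_le_div_of_nonneg_left (by linarith) (by positivity)
    exact_mod_cast Nat.add_le_add_right hnm 1
  have hI : (⋂ n : ℕ, {f : C(T, ℝ) | x - x / 2 / (n + 1) ≤ f t}) = {f : C(T, ℝ) | x ≤ f t} := by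
    ext f
    simp only [mem_iInter, mem_setOf_eq]
    constructor
    · intro h
      by_contra hlt
      push_neg at hlt
      obtain ⟨n, hn⟩ := exists_nat_one_div_lt (div_pos (sub_pos.2 hlt) (by linarith : (0:ℝ) < x / 2))
      have h2 : x / 2 / (n + 1) < x - f t := by
        have hx2 : (0:ℝ) < x / 2 := by linarith
        have h3 := mul_lt_mul_of_pos_left hn hx2
        rw [mul_div_cancel₀ _ (ne_of_gt hx2)] at h3
        calc x / 2 / ((n:ℝ) + 1) = x / 2 * (1 / ((n:ℝ) + 1)) := by ring
        _ < x - f t := h3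
      have := h n
      linarith
    · intro h n
      have h2 : (0:ℝ) < x / 2 / (n + 1) := by positivity
      linarith
  have hseq : Filter.Tendsto (fun n : ℕ => μ {f : C(T, ℝ) | x - x / 2 / (n + 1) ≤ f t})
      Filter.atTop (nhds (μ {f : C(T, ℝ) | x ≤ f t})) := by
    have := tendsto_measure_iInter_atTop (μ := μ)
      (fun n => (measSet_S t _).nullMeasurableSet) hanti
      ⟨0, by simpa using mu_S_ne_top hμ (t := t) (by linarith : (0:ℝ) < x - x / 2 / (0 + 1))⟩
    rwa [hI] at this
  have heq : sInf ((fun y => μ {f : C(T, ℝ) | y ≤ f t}) '' Iio x)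
      = μ {f : C(T, ℝ) | x ≤ f t} := by
    apply le_antisymm
    · refine ge_of_tendsto hseq (Filter.Eventually.of_forall fun n => sInf_le ?_)
      exact ⟨x - x / 2 / (n + 1), by simp only [mem_Iio]; have := hy n; nlinarith [hy n,
        (by positivity : (0:ℝ) < x / 2 / (n + 1))], rfl⟩
    · apply le_sInf
      rintro v ⟨y, hy', rfl⟩
      exact antitone_mu_S (le_of_lt hy')
  rwa [heq] at h1

end Helpers3

section Helpers4

variable {T : Type*} [MetricSpace T] [CompactSpace T]
  [MeasurableSpace C(T, ℝ)] [BorelSpace C(T, ℝ)]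
  {μ : Measure C(T, ℝ)} {t : T}

/-- Continuity of `μbar` on `(0,∞)` iff no positive level is charged. -/
lemma contOn_iff_no_atoms (hμ : ∀ ε : ℝ, 0 < ε → μ {f : C(T, ℝ) | ε < ‖f‖} ≠ ⊤) :
    ContinuousOn (fun y => μ {f : C(T, ℝ) | y ≤ f t}) (Ioi 0) ↔
      ∀ x : ℝ, 0 < x → μ {f : C(T, ℝ) | f t = x} = 0 := by
  constructor
  · intro hc x hx
    have hca : ContinuousAt (fun y => μ {f : C(T, ℝ) | y ≤ f t}) x :=
      (hc x hx).continuousAt (Ioi_mem_nhds hx)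
    have h1 : Filter.Tendsto (fun y => μ {f : C(T, ℝ) | y ≤ f t}) (nhdsWithin x (Ioi x))
        (nhds (μ {f : C(T, ℝ) | x ≤ f t})) := hca.continuousWithinAt
    have h2 := tendsto_mu_S_right (μ := μ) (t := t) x
    have heq : μ {f : C(T, ℝ) | x ≤ f t} = μ {f : C(T, ℝ) | x < f t} :=
      tendsto_nhds_unique h1 h2
    have hd := S_decomp (μ := μ) (t := t) x
    have hfin : μ {f : C(T, ℝ) | x < f t} ≠ ⊤ :=
      ne_top_of_le_ne_top (mu_S_ne_top hμ hx) (measure_mono fun f (hf : x < f t) => le_of_lt hf)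
    rw [heq] at hd
    nth_rewrite 1 [← zero_add (μ {f : C(T, ℝ) | x < f t})] at hd
    exact ((ENNReal.add_left_inj hfin).1 hd.symm)
  · intro h x hx
    apply ContinuousAt.continuousWithinAt
    rw [continuousAt_iff_continuous_left'_right']
    constructor
    · exact tendsto_mu_S_left hμ hx
    · have h2 := tendsto_mu_S_right (μ := μ) (t := t) x
      have hd := S_decomp (μ := μ) (t := t) x
      rw [h x hx, zero_add] at hd
      rw [← hd] at h2
      exact h2

/-- Divergence of `μbar` at `0⁺` iff `μ {f t > 0} = ∞`. -/
lemma tendsto_top_iff (hμ : ∀ ε : ℝ, 0 < ε → μ {f : C(T, ℝ) | ε < ‖f‖} ≠ ⊤) :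
    Filter.Tendsto (fun y => μ {f : C(T, ℝ) | y ≤ f t}) (nhdsWithin 0 (Ioi 0)) (nhds ⊤) ↔
      μ {f : C(T, ℝ) | 0 < f t} = ⊤ := by
  have h2 := tendsto_mu_S_right (μ := μ) (t := t) 0
  constructor
  · intro h1
    exact (tendsto_nhds_unique h2 h1).symm ▸ rfl
  · intro h
    rwa [h] at h2

/-- `μ(S N) → 0` as `N → ∞`. -/
lemma tendsto_mu_S_atTop (hμ : ∀ ε : ℝ, 0 < ε → μ {f : C(T, ℝ) | ε < ‖f‖} ≠ ⊤) :
    Filter.Tendsto (fun n : ℕ => μ {f : C(T, ℝ) | (n : ℝ) + 1 ≤ f t}) Filter.atTop (nhds 0) := by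
  have hanti : Antitone fun n : ℕ => {f : C(T, ℝ) | (n : ℝ) + 1 ≤ f t} := by
    intro n m hnm f hf
    exact le_trans (add_le_add_left (by exact_mod_cast hnm : (n:ℝ) ≤ m) 1) hf
  have hI : (⋂ n : ℕ, {f : C(T, ℝ) | (n : ℝ) + 1 ≤ f t}) = (∅ : Set C(T, ℝ)) := by
    ext f
    simp only [mem_iInter, mem_setOf_eq, mem_empty_iff_false, iff_false, not_forall]
    obtain ⟨n, hn⟩ := exists_nat_gt (f t)
    exact ⟨n, by push_neg; linarith⟩
  have := tendsto_measure_iInter_atTop (μ := μ)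
    (fun n => (measSet_S t _).nullMeasurableSet) hanti
    ⟨0, mu_S_ne_top hμ (by norm_num : (0:ℝ) < (0:ℕ) + 1)⟩
  rw [hI, measure_empty] at this
  exact this

end Helpers4

section Helpers5

variable {Ω : Type*} [MeasurableSpace Ω] {α : Type*} [MeasurableSpace α]
  {P : Measure Ω} [IsProbabilityMeasure P] {Φ : Ω → Measure α} {μ : Measure α}

lemma pp_zero (hP : IsPoissonPM P Φ μ) {A : Set α} (hA : MeasurableSet A) (hfin : μ A ≠ ⊤) :
    P {ω | Φ ω A = 0} = ENNReal.ofReal (Real.exp (-(μ A).toReal)) := by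
  have := hP.2.1 A hA hfin 0
  simpa using this

lemma pp_one (hP : IsPoissonPM P Φ μ) {A : Set α} (hA : MeasurableSet A) (hfin : μ A ≠ ⊤) :
    P {ω | Φ ω A = 1} = ENNReal.ofReal (Real.exp (-(μ A).toReal) * (μ A).toReal) := by
  have := hP.2.1 A hA hfin 1
  simpa using this

lemma pp_meas_event (hP : IsPoissonPM P Φ μ) {A : Set α} (hA : MeasurableSet A)
    {s : Set ℝ≥0∞} (hs : MeasurableSet s) : MeasurableSet {ω | Φ ω A ∈ s} :=
  hP.1 A hA hs

/-- Independence of counts on two disjoint sets. -/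
lemma pp_indep (hP : IsPoissonPM P Φ μ) {A B : Set α} (hA : MeasurableSet A)
    (hB : MeasurableSet B) (hd : Disjoint A B) {s u : Set ℝ≥0∞}
    (hs : MeasurableSet s) (hu : MeasurableSet u) :
    P ({ω | Φ ω A ∈ s} ∩ {ω | Φ ω B ∈ u}) = P {ω | Φ ω A ∈ s} * P {ω | Φ ω B ∈ u} := by
  have hmeas : ∀ i : Fin 2, MeasurableSet (![A, B] i) := by
    intro i; fin_cases i <;> simpa
  have hpair : Pairwise (Function.onFun Disjoint ![A, B]) := by
    intro i j hij
    fin_cases i <;> fin_cases j <;>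
      first
        | exact absurd rfl hij
        | exact hd
        | exact hd.symm
  have hind := (hP.2.2 2 ![A, B] hmeas hpair).indepFun (show (0 : Fin 2) ≠ 1 by decide)
  have h0 : (fun ω => Φ ω (![A, B] 0)) = fun ω => Φ ω A := by simp
  have h1 : (fun ω => Φ ω (![A, B] 1)) = fun ω => Φ ω B := by simp
  rw [h0, h1] at hind
  have := (ProbabilityTheory.indepFun_iff_measure_inter_preimage_eq_mul.1 hind) s u hs hu
  simpa [Set.preimage] using this

end Helpers5

section Helpers6

variable {T : Type*} [MetricSpace T] [CompactSpace T]
  [MeasurableSpace C(T, ℝ)] [BorelSpace C(T, ℝ)]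
  {Ω : Type*} [MeasurableSpace Ω] {P : Measure Ω} [IsProbabilityMeasure P]
  {Φ : Ω → Measure C(T, ℝ)} {μ : Measure C(T, ℝ)}

lemma pp_compl_two (hMp : ∀ ω, IsMp (Φ ω)) {A : Set C(T, ℝ)} (hA : MeasurableSet A) :
    {ω | 2 ≤ Φ ω A}ᶜ = {ω | Φ ω A = 0} ∪ {ω | Φ ω A = 1} := by
  ext ω
  simp only [mem_compl_iff, mem_setOf_eq, mem_union, not_le]
  constructor
  · intro h
    by_contra hc
    push_neg at hc
    exact absurd (pm_value_trichotomy (hMp ω) hA hc.1 hc.2) (not_le.2 h)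
  · rintro (h | h) <;> rw [h] <;> norm_num

lemma pp_ge_two (hP : IsPoissonPM P Φ μ) (hMp : ∀ ω, IsMp (Φ ω)) {A : Set C(T, ℝ)}
    (hA : MeasurableSet A) (hfin : μ A ≠ ⊤) :
    P {ω | 2 ≤ Φ ω A} =
      ENNReal.ofReal (1 - Real.exp (-(μ A).toReal) * (1 + (μ A).toReal)) := by
  set m := (μ A).toReal with hm
  have hm0 : 0 ≤ m := ENNReal.toReal_nonneg
  have hmeas0 : MeasurableSet {ω | Φ ω A = 0} :=
    pp_meas_event hP hA (measurableSet_singleton 0)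
  have hmeas1 : MeasurableSet {ω | Φ ω A = 1} :=
    pp_meas_event hP hA (measurableSet_singleton 1)
  have hmeas2 : MeasurableSet {ω | 2 ≤ Φ ω A} :=
    pp_meas_event hP hA measurableSet_Ici
  have hdis : Disjoint {ω | Φ ω A = 0} {ω | Φ ω A = 1} := by
    rw [disjoint_left]
    intro ω h0 h1
    rw [mem_setOf_eq] at h0 h1
    rw [h0] at h1
    exact zero_ne_one h1
  have hP2 : P {ω | 2 ≤ Φ ω A} = 1 - P ({ω | Φ ω A = 0} ∪ {ω | Φ ω A = 1}) := by
    rw [← prob_compl_eq_one_sub (hmeas0.union hmeas1), ← pp_compl_two hMp hA, compl_compl]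
  rw [hP2, measure_union hdis hmeas1, pp_zero hP hA hfin, pp_one hP hA hfin,
    ← ENNReal.ofReal_add (Real.exp_nonneg _) (by positivity)]
  have h1 : Real.exp (-m) + Real.exp (-m) * m = Real.exp (-m) * (1 + m) := by ring
  rw [h1]
  have hle : Real.exp (-m) * (1 + m) ≤ 1 := by
    have := Real.add_one_le_exp m
    have hexp := Real.exp_pos m
    rw [Real.exp_neg]
    rw [inv_mul_le_iff₀ hexp, mul_one]
    linarith
  rw [← ENNReal.ofReal_one, ← ENNReal.ofReal_sub _ (by positivity)]

lemma pp_ge_two_le_sq (hP : IsPoissonPM P Φ μ) (hMp : ∀ ω, IsMp (Φ ω)) {A : Set C(T, ℝ)}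
    (hA : MeasurableSet A) (hfin : μ A ≠ ⊤) :
    P {ω | 2 ≤ Φ ω A} ≤ μ A * μ A := by
  rw [pp_ge_two hP hMp hA hfin]
  set m := (μ A).toReal with hm
  have hm0 : 0 ≤ m := ENNReal.toReal_nonneg
  have hreal : 1 - Real.exp (-m) * (1 + m) ≤ m * m := by
    have h2 := Real.add_one_le_exp (-m)
    have h3 : (1 - m) * (1 + m) ≤ Real.exp (-m) * (1 + m) :=
      mul_le_mul_of_nonneg_right (by linarith) (by linarith)
    nlinarith
  calc ENNReal.ofReal (1 - Real.exp (-m) * (1 + m)) ≤ ENNReal.ofReal (m * m) :=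
    ENNReal.ofReal_le_ofReal hreal
  _ = ENNReal.ofReal m * ENNReal.ofReal m := ENNReal.ofReal_mul hm0
  _ = μ A * μ A := by rw [ENNReal.ofReal_toReal hfin]

lemma pp_ge_two_pos (hP : IsPoissonPM P Φ μ) (hMp : ∀ ω, IsMp (Φ ω)) {A : Set C(T, ℝ)}
    (hA : MeasurableSet A) (hfin : μ A ≠ ⊤) (h0 : μ A ≠ 0) :
    0 < P {ω | 2 ≤ Φ ω A} := by
  rw [pp_ge_two hP hMp hA hfin]
  apply ENNReal.ofReal_pos.2
  set m := (μ A).toReal with hm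
  have hmpos : 0 < m := ENNReal.toReal_pos h0 hfin
  have := Real.add_one_lt_exp (ne_of_gt hmpos)
  have hexp := Real.exp_pos m
  rw [Real.exp_neg]
  have : (1 + m) * (Real.exp m)⁻¹ < 1 := by
    rw [mul_inv_lt_iff₀' hexp, mul_one]
    linarith
  nlinarith [this]

lemma pp_ne_one_pos (hP : IsPoissonPM P Φ μ) {A : Set C(T, ℝ)}
    (hA : MeasurableSet A) (hfin : μ A ≠ ⊤) :
    0 < P {ω | Φ ω A ≠ 1} := by
  have hmeas1 : MeasurableSet {ω | Φ ω A = 1} :=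
    pp_meas_event hP hA (measurableSet_singleton 1)
  have : {ω | Φ ω A ≠ 1} = {ω | Φ ω A = 1}ᶜ := rfl
  rw [this, prob_compl_eq_one_sub hmeas1, pp_one hP hA hfin]
  rw [tsub_pos_iff_lt]
  apply ENNReal.ofReal_lt_one.2
  set m := (μ A).toReal with hm
  have hm0 : 0 ≤ m := ENNReal.toReal_nonneg
  have h2 := Real.add_one_le_exp m
  have hexp := Real.exp_pos m
  rw [Real.exp_neg, inv_mul_lt_iff₀ hexp, mul_one]
  linarith

lemma real_exp_decay : Filter.Tendsto (fun x : ℝ => Real.exp (-x) * (1 + x))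
    Filter.atTop (nhds 0) := by
  have h0 := Real.tendsto_pow_mul_exp_neg_atTop_nhds_zero 0
  have h1 := Real.tendsto_pow_mul_exp_neg_atTop_nhds_zero 1
  have := h0.add h1
  rw [add_zero] at this
  refine this.congr fun x => ?_
  simp [pow_one]
  ring

/-- Counts on an infinite-mass set are a.s. `≥ 2`. -/
lemma pp_infinite (hP : IsPoissonPM P Φ μ) (hMp : ∀ ω, IsMp (Φ ω))
    (hμ : ∀ ε : ℝ, 0 < ε → μ {f : C(T, ℝ) | ε < ‖f‖} ≠ ⊤)
    (hnull : μ {f : C(T, ℝ) | f = 0} = 0)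
    {A : Set C(T, ℝ)} (hA : MeasurableSet A) (hinf : μ A = ⊤) :
    P {ω | Φ ω A ≤ 1} = 0 := by
  set B : ℕ → Set C(T, ℝ) := fun n => A ∩ {f : C(T, ℝ) | 1 / (n + 1) < ‖f‖} with hB
  have hBmeas : ∀ n, MeasurableSet (B n) :=
    fun n => hA.inter ((continuous_norm.measurable) measurableSet_Ioi)
  have hBfin : ∀ n, μ (B n) ≠ ⊤ := fun n =>
    ne_top_of_le_ne_top (hμ (1 / (n + 1)) (by positivity)) (measure_mono inter_subset_right)
  have hBmono : Monotone B := by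
    intro n m hnm
    apply inter_subset_inter_right
    intro f hf
    have hf' : 1 / ((n:ℝ) + 1) < ‖f‖ := hf
    show 1 / ((m:ℝ) + 1) < ‖f‖
    have hle : 1 / ((m:ℝ) + 1) ≤ 1 / ((n:ℝ) + 1) := by
      apply one_div_le_one_div_of_le (by positivity)
      exact_mod_cast Nat.add_le_add_right hnm 1
    linarith
  have hBU : (⋃ n, B n) = A ∩ {f : C(T, ℝ) | f ≠ 0} := by
    rw [hB, ← inter_iUnion]
    congr 1
    ext f
    simp only [mem_iUnion, mem_setOf_eq]
    constructor
    · rintro ⟨n, hn⟩ h0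
      rw [h0] at hn
      simp at hn
      have : (0:ℝ) < 1 / ((n:ℝ)+1) := by positivity
      linarith
    · intro h
      have hpos : 0 < ‖f‖ := norm_pos_iff.2 h
      obtain ⟨n, hn⟩ := exists_nat_one_div_lt hpos
      exact ⟨n, hn⟩
  have hBtop : Filter.Tendsto (fun n => μ (B n)) Filter.atTop (nhds ⊤) := by
    have := tendsto_measure_iUnion_atTop (μ := μ) hBmono
    rw [hBU] at this
    have hAeq : μ (A ∩ {f : C(T, ℝ) | f ≠ 0}) = ⊤ := by
      have hsub : A ⊆ (A ∩ {f : C(T, ℝ) | f ≠ 0}) ∪ {f : C(T, ℝ) | f = 0} := by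
        intro f hf
        by_cases h : f = 0
        · exact Or.inr h
        · exact Or.inl ⟨hf, h⟩
      have := (measure_mono (μ := μ) hsub).trans (measure_union_le _ _)
      rw [hinf, hnull, add_zero] at this
      exact top_le_iff.1 this
    rwa [hAeq] at this
  -- bound by each B n
  have hsub : ∀ n, {ω | Φ ω A ≤ 1} ⊆ {ω | Φ ω (B n) = 0} ∪ {ω | Φ ω (B n) = 1} := by
    intro n ω hω
    have hle : Φ ω (B n) ≤ 1 := le_trans (measure_mono inter_subset_left) hω
    by_cases h0 : Φ ω (B n) = 0
    · exact Or.inl h0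
    by_cases h1 : Φ ω (B n) = 1
    · exact Or.inr h1
    exact absurd (le_trans (pm_value_trichotomy (hMp ω) (hBmeas n) h0 h1) hle) (by norm_num)
  have hbound : ∀ n, P {ω | Φ ω A ≤ 1} ≤
      ENNReal.ofReal (Real.exp (-(μ (B n)).toReal) * (1 + (μ (B n)).toReal)) := by
    intro n
    calc P {ω | Φ ω A ≤ 1} ≤ P ({ω | Φ ω (B n) = 0} ∪ {ω | Φ ω (B n) = 1}) :=
      measure_mono (hsub n)
    _ ≤ P {ω | Φ ω (B n) = 0} + P {ω | Φ ω (B n) = 1} := measure_union_le _ _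
    _ = ENNReal.ofReal (Real.exp (-(μ (B n)).toReal) * (1 + (μ (B n)).toReal)) := by
        rw [pp_zero hP (hBmeas n) (hBfin n), pp_one hP (hBmeas n) (hBfin n),
          ← ENNReal.ofReal_add (Real.exp_nonneg _) (by positivity)]
        congr 1
        ring
  -- the bound tends to 0
  have hmreal : Filter.Tendsto (fun n => (μ (B n)).toReal) Filter.atTop Filter.atTop := by
    rw [Filter.tendsto_atTop]
    intro K
    have hev : ∀ᶠ n in Filter.atTop, ENNReal.ofReal (max K 0) < μ (B n) :=
      hBtop.eventually (eventually_gt_nhds ENNReal.ofReal_lt_top)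
    filter_upwards [hev] with n hn
    have := (ENNReal.ofReal_lt_iff_lt_toReal (le_max_right K 0) (hBfin n)).1 hn
    exact le_trans (le_max_left K 0) this.le
  have hlim : Filter.Tendsto
      (fun n => ENNReal.ofReal (Real.exp (-(μ (B n)).toReal) * (1 + (μ (B n)).toReal)))
      Filter.atTop (nhds 0) := by
    rw [← ENNReal.ofReal_zero]
    exact ENNReal.tendsto_ofReal (real_exp_decay.comp hmreal)
  exact le_zero_iff.1 (ge_of_tendsto' hlim hbound)

end Helpers6

section Helpers7

variable {T : Type*} [MetricSpace T] [CompactSpace T]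
  [MeasurableSpace C(T, ℝ)] [BorelSpace C(T, ℝ)] {t : T}

lemma atom_in_set_ne_zero {M : Measure C(T, ℝ)} {f : C(T, ℝ)} (hf : f ∈ atomsOf M)
    {A : Set C(T, ℝ)} (hfA : f ∈ A) : M A ≠ 0 := by
  intro h
  exact hf (le_zero_iff.1 (h ▸ measure_mono (singleton_subset_iff.2 hfA)))

/-- The event `{η(t) = x}` for `x > 0`. -/
lemma event_max_eq_pos {Ω : Type*} [MeasurableSpace Ω] {Φ : Ω → Measure C(T, ℝ)}
    (hMp : ∀ ω, IsMp (Φ ω)) {x : ℝ} (hx : 0 < x) :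
    {ω | maxM (Φ ω) t = x} =
      {ω | Φ ω {f : C(T, ℝ) | f t = x} ≠ 0} ∩ {ω | Φ ω {f : C(T, ℝ) | x < f t} = 0} := by
  ext ω
  simp only [mem_setOf_eq, mem_inter_iff]
  constructor
  · intro h
    have hG : Φ ω {f : C(T, ℝ) | x < f t} = 0 := h ▸ pm_G_maxM_zero (hMp ω) t
    have hS : Φ ω {f : C(T, ℝ) | x ≤ f t} ≠ 0 := by
      intro h0
      have := (maxM_lt_iff (hMp ω) t hx).1 h0
      rw [h] at this
      exact lt_irrefl x this
    refine ⟨?_, hG⟩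
    rw [S_decomp (t := t) x, hG, add_zero] at hS
    exact hS
  · rintro ⟨hD, hG⟩
    have hS : Φ ω {f : C(T, ℝ) | x ≤ f t} ≠ 0 := by
      rw [S_decomp (t := t) x, hG, add_zero]
      exact hD
    have hge : x ≤ maxM (Φ ω) t := by
      by_contra hlt
      push_neg at hlt
      exact hS ((maxM_lt_iff (hMp ω) t hx).2 hlt)
    have hle : maxM (Φ ω) t ≤ x := by
      by_contra hgt
      push_neg at hgt
      obtain ⟨f, hf, hft⟩ := maxM_attained (hMp ω) t (lt_trans hx hgt)
      exact atom_in_set_ne_zero hf (by rw [mem_setOf_eq, hft]; exact hgt) hG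
    exact le_antisymm hle hge

/-- The event `{η(t) = 0}`. -/
lemma event_max_eq_zero {Ω : Type*} [MeasurableSpace Ω] {Φ : Ω → Measure C(T, ℝ)}
    (hMp : ∀ ω, IsMp (Φ ω)) :
    {ω | maxM (Φ ω) t = 0} = {ω | Φ ω {f : C(T, ℝ) | 0 < f t} = 0} := by
  ext ω
  simp only [mem_setOf_eq]
  exact maxM_eq_zero_iff (hMp ω) t

lemma event_max_neg {Ω : Type*} [MeasurableSpace Ω] {Φ : Ω → Measure C(T, ℝ)}
    (hMp : ∀ ω, IsMp (Φ ω)) {x : ℝ} (hx : x < 0) :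
    {ω | maxM (Φ ω) t = x} = (∅ : Set Ω) := by
  ext ω
  simp only [mem_setOf_eq, mem_empty_iff_false, iff_false]
  intro h
  exact absurd (h ▸ maxM_nonneg (hMp ω) t) (not_le.2 hx)

lemma Phip_univ {Ω : Type*} [MeasurableSpace Ω] {Φ : Ω → Measure C(T, ℝ)}
    {Φp : Ω → Measure C(T, ℝ)}
    (hΦp : ∀ ω, Φp ω = (Φ ω).restrict {f : C(T, ℝ) | maxM (Φ ω) t ≤ f t}) (ω : Ω) :
    Φp ω Set.univ = Φ ω {f : C(T, ℝ) | maxM (Φ ω) t ≤ f t} := by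
  rw [hΦp ω, Measure.restrict_apply MeasurableSet.univ, univ_inter]

/-- Dichotomy when the extremal count is not `1`. -/
lemma bad_event_cases {Ω : Type*} [MeasurableSpace Ω] {Φ : Ω → Measure C(T, ℝ)}
    (hMp : ∀ ω, IsMp (Φ ω)) {Φp : Ω → Measure C(T, ℝ)}
    (hΦp : ∀ ω, Φp ω = (Φ ω).restrict {f : C(T, ℝ) | maxM (Φ ω) t ≤ f t}) (ω : Ω)
    (hω : Φp ω Set.univ ≠ 1) :
    (∀ n : ℕ, Φ ω {f : C(T, ℝ) | 1 / (n + 1) ≤ f t} = 0) ∨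
      (∃ x : ℝ, 0 < x ∧ 2 ≤ Φ ω {f : C(T, ℝ) | f t = x}) := by
  rcases eq_or_lt_of_le (maxM_nonneg (hMp ω) t) with hs | hs
  · left
    intro n
    have hG0 : Φ ω {f : C(T, ℝ) | 0 < f t} = 0 := (maxM_eq_zero_iff (hMp ω) t).1 hs.symm
    refine le_zero_iff.1 (le_trans (measure_mono fun f hf => ?_) hG0.le)
    have hf' : 1 / ((n:ℝ) + 1) ≤ f t := hf
    show 0 < f t
    have : (0:ℝ) < 1 / ((n:ℝ) + 1) := by positivity
    linarith
  · right
    refine ⟨maxM (Φ ω) t, hs, ?_⟩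
    set s := maxM (Φ ω) t with hsdef
    have hGs : Φ ω {f : C(T, ℝ) | s < f t} = 0 := pm_G_maxM_zero (hMp ω) t
    have hSs : Φ ω {f : C(T, ℝ) | s ≤ f t} ≠ 0 := by
      intro h0
      exact lt_irrefl s ((maxM_lt_iff (hMp ω) t hs).1 h0)
    have hdecomp := S_decomp (μ := Φ ω) (t := t) s
    rw [hGs, add_zero] at hdecomp
    have hD0 : Φ ω {f : C(T, ℝ) | f t = s} ≠ 0 := hdecomp ▸ hSs
    have hD1 : Φ ω {f : C(T, ℝ) | f t = s} ≠ 1 := by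
      rw [← hdecomp]
      rw [Phip_univ hΦp ω] at hω
      exact hω
    exact pm_value_trichotomy (hMp ω) (measSet_D t s) hD0 hD1

end Helpers7

section Helpers8

variable {T : Type*} [MetricSpace T] [CompactSpace T]
  [MeasurableSpace C(T, ℝ)] [BorelSpace C(T, ℝ)]
  {μ : Measure C(T, ℝ)} {t : T}

lemma toReal_tendsto_atTop {a : ℕ → ℝ≥0∞} (h : Filter.Tendsto a Filter.atTop (nhds ⊤))
    (hfin : ∀ n, a n ≠ ⊤) :
    Filter.Tendsto (fun n => (a n).toReal) Filter.atTop Filter.atTop := by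
  rw [Filter.tendsto_atTop]
  intro K
  have hev : ∀ᶠ n in Filter.atTop, ENNReal.ofReal (max K 0) < a n :=
    h.eventually (eventually_gt_nhds ENNReal.ofReal_lt_top)
  filter_upwards [hev] with n hn
  have := (ENNReal.ofReal_lt_iff_lt_toReal (le_max_right K 0) (hfin n)).1 hn
  exact le_trans (le_max_left K 0) this.le

lemma continuousAt_mu_S (hμ : ∀ ε : ℝ, 0 < ε → μ {f : C(T, ℝ) | ε < ‖f‖} ≠ ⊤)
    {x : ℝ} (hx : 0 < x) (hD : μ {f : C(T, ℝ) | f t = x} = 0) :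
    ContinuousAt (fun y => μ {f : C(T, ℝ) | y ≤ f t}) x := by
  rw [continuousAt_iff_continuous_left'_right']
  constructor
  · exact tendsto_mu_S_left hμ hx
  · have h2 := tendsto_mu_S_right (μ := μ) (t := t) x
    have hd := S_decomp (μ := μ) (t := t) x
    rw [hD, zero_add] at hd
    rw [← hd] at h2
    exact h2

end Helpers8

section Helpers9

variable {T : Type*} [MetricSpace T] [CompactSpace T]
  [MeasurableSpace C(T, ℝ)] [BorelSpace C(T, ℝ)]
  {μ : Measure C(T, ℝ)} {t : T}
  {Ω : Type*} [MeasurableSpace Ω] {P : Measure Ω} [IsProbabilityMeasure P]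
  {Φ : Ω → Measure C(T, ℝ)}

/-- Under continuity of `μ̄_t` on `(0,∞)`, ties above level `ε` have probability zero. -/
lemma tie_null (hP : IsPoissonPM P Φ μ) (hMp : ∀ ω, IsMp (Φ ω))
    (hμ : ∀ ε : ℝ, 0 < ε → μ {f : C(T, ℝ) | ε < ‖f‖} ≠ ⊤)
    (hD : ∀ x : ℝ, 0 < x → μ {f : C(T, ℝ) | f t = x} = 0)
    {ε : ℝ} (hε : 0 < ε) :
    P {ω | ∃ x : ℝ, ε ≤ x ∧ 2 ≤ Φ ω {f : C(T, ℝ) | f t = x}} = 0 := by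
  set Tev := {ω | ∃ x : ℝ, ε ≤ x ∧ 2 ≤ Φ ω {f : C(T, ℝ) | f t = x}} with hTev
  suffices hδ : ∀ δ : ℝ, 0 < δ → P Tev ≤ ENNReal.ofReal δ by
    have hseq : ∀ n : ℕ, P Tev ≤ ENNReal.ofReal (1 / (n + 1)) := fun n => hδ _ (by positivity)
    have hlim : Filter.Tendsto (fun n : ℕ => ENNReal.ofReal (1 / (n + 1)))
        Filter.atTop (nhds 0) := by
      rw [← ENNReal.ofReal_zero]
      exact ENNReal.tendsto_ofReal tendsto_one_div_add_atTop_nhds_zero_nat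
    exact le_zero_iff.1 (ge_of_tendsto' hlim hseq)
  intro δ hδpos
  -- choose the cutoff N
  set b := Real.sqrt (δ / 2) with hb
  have hbpos : 0 < b := Real.sqrt_pos.2 (by linarith)
  have hev : ∀ᶠ n : ℕ in Filter.atTop,
      μ {f : C(T, ℝ) | (n : ℝ) + 1 ≤ f t} < ENNReal.ofReal b :=
    (tendsto_mu_S_atTop hμ).eventually (eventually_lt_nhds (ENNReal.ofReal_pos.2 hbpos))
  obtain ⟨N₀, hN₀⟩ := Filter.eventually_atTop.1 hev
  set N := max N₀ ⌈ε⌉₊ with hN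
  have hNb : μ {f : C(T, ℝ) | (N : ℝ) + 1 ≤ f t} < ENNReal.ofReal b := hN₀ N (le_max_left _ _)
  have hεN : ε < (N : ℝ) + 1 := by
    have h1 : (⌈ε⌉₊ : ℝ) ≤ N := by exact_mod_cast le_max_right N₀ ⌈ε⌉₊
    have h2 := Nat.le_ceil ε
    linarith
  -- uniform continuity of the (real-valued) tail function on [ε, N+1]
  set F : ℝ → ℝ := fun y => (μ {f : C(T, ℝ) | y ≤ f t}).toReal with hF
  have hFcont : ContinuousOn F (Icc ε ((N : ℝ) + 1)) := by
    intro x hx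
    have hx0 : 0 < x := lt_of_lt_of_le hε hx.1
    have hct : ContinuousAt (fun y => (μ {f : C(T, ℝ) | y ≤ f t}).toReal) x :=
      (ENNReal.tendsto_toReal (mu_S_ne_top hμ hx0)).comp (continuousAt_mu_S hμ hx0 (hD x hx0))
    exact hct.continuousWithinAt
  have hUC := (isCompact_Icc : IsCompact (Icc ε ((N : ℝ) + 1))).uniformContinuousOn_of_continuous
    hFcont
  rw [Metric.uniformContinuousOn_iff] at hUC
  set m0 := (μ {f : C(T, ℝ) | ε ≤ f t}).toReal with hm0
  have hm0fin : μ {f : C(T, ℝ) | ε ≤ f t} ≠ ⊤ := mu_S_ne_top hμ hε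
  have hm0nonneg : 0 ≤ m0 := ENNReal.toReal_nonneg
  set γ := (δ / 2) / (m0 + 1) with hγ
  have hγpos : 0 < γ := by positivity
  obtain ⟨d, hdpos, hd⟩ := hUC γ hγpos
  -- partition of [ε, N+1] into K intervals of length h < d
  obtain ⟨K, hK⟩ := exists_nat_gt (((N : ℝ) + 1 - ε) / d)
  have hKpos : 0 < K := by
    rcases Nat.eq_zero_or_pos K with h0 | h
    · exfalso
      rw [h0] at hK
      simp only [Nat.cast_zero] at hK
      have : 0 < ((N : ℝ) + 1 - ε) / d := div_pos (by linarith) hdpos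
      linarith
    · exact h
  have hKR : (0 : ℝ) < K := by exact_mod_cast hKpos
  set h : ℝ := ((N : ℝ) + 1 - ε) / K with hh
  have hhpos : 0 < h := by
    apply div_pos (by linarith) hKR
  have hhd : h < d := by
    rw [hh, div_lt_iff₀ hKR]
    rw [div_lt_iff₀ hdpos] at hK
    linarith [hK]
  set a : ℕ → ℝ := fun k => ε + k * h with ha
  have haK : a K = (N : ℝ) + 1 := by
    rw [ha, hh]
    field_simp
    ring
  have hamono : Monotone a := by
    intro i j hij
    simp only [ha]
    have : (i : ℝ) ≤ j := by exact_mod_cast hij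
    nlinarith
  have haε : ∀ k : ℕ, ε ≤ a k := by
    intro k
    have : 0 ≤ (k : ℝ) * h := by positivity
    simp only [ha]; linarith
  have haIcc : ∀ k ≤ K, a k ∈ Icc ε ((N : ℝ) + 1) := by
    intro k hk
    exact ⟨haε k, by rw [← haK]; exact hamono hk⟩
  set I : ℕ → Set C(T, ℝ) := fun k => {f : C(T, ℝ) | a k ≤ f t ∧ f t < a (k + 1)} with hI
  have hImeas : ∀ k, MeasurableSet (I k) := fun k =>
    (measSet_S t (a k)).inter (meas_eval t measurableSet_Iio)
  have hIsub : ∀ k, I k ⊆ {f : C(T, ℝ) | ε ≤ f t} := by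
    intro k f hf
    have h1 : a k ≤ f t := hf.1
    have h2 : ε ≤ a k := haε k
    show ε ≤ f t
    linarith
  have hIfin : ∀ k, μ (I k) ≠ ⊤ := fun k => ne_top_of_le_ne_top hm0fin (measure_mono (hIsub k))
  have hIbound : ∀ k, k < K → μ (I k) ≤ ENNReal.ofReal γ := by
    intro k hk
    have hsub2 : {f : C(T, ℝ) | a (k + 1) ≤ f t} ⊆ {f : C(T, ℝ) | a k ≤ f t} :=
      fun f hf => le_trans (hamono (Nat.le_succ k)) hf
    have hIeq : I k = {f : C(T, ℝ) | a k ≤ f t} \ {f : C(T, ℝ) | a (k + 1) ≤ f t} := by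
      ext f
      simp only [hI, mem_setOf_eq, mem_diff, not_le]
    have hposk : 0 < a k := lt_of_lt_of_le hε (haε k)
    have hposk1 : 0 < a (k + 1) := lt_of_lt_of_le hε (haε (k + 1))
    rw [hIeq, measure_diff hsub2 (measSet_S t _).nullMeasurableSet (mu_S_ne_top hμ hposk1)]
    rw [← ENNReal.ofReal_toReal (mu_S_ne_top hμ hposk),
      ← ENNReal.ofReal_toReal (mu_S_ne_top hμ hposk1),
      ← ENNReal.ofReal_sub _ ENNReal.toReal_nonneg]
    apply ENNReal.ofReal_le_ofReal
    have hmem1 : a k ∈ Icc ε ((N : ℝ) + 1) := haIcc k (le_of_lt hk)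
    have hmem2 : a (k + 1) ∈ Icc ε ((N : ℝ) + 1) := haIcc (k + 1) (Nat.succ_le_of_lt hk)
    have hdiff : a (k + 1) - a k = h := by simp only [ha]; push_cast; ring
    have hdist : dist (a k) (a (k + 1)) < d := by
      rw [Real.dist_eq, abs_sub_comm, abs_of_nonneg (by linarith [hdiff, hhpos.le] : 0 ≤ a (k+1) - a k)]
      linarith
    have := hd (a k) hmem1 (a (k + 1)) hmem2 hdist
    rw [Real.dist_eq] at this
    exact le_of_lt (lt_of_le_of_lt (le_abs_self _) this)
  have hIdisj : PairwiseDisjoint (↑(Finset.range K) : Set ℕ) I := by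
    have key : ∀ i j, i < j → Disjoint (I i) (I j) := by
      intro i j hij
      rw [Set.disjoint_left]
      intro f hfi hfj
      have h1 : f t < a (i + 1) := hfi.2
      have h2 : a j ≤ f t := hfj.1
      have h3 : a (i + 1) ≤ a j := hamono hij
      linarith
    intro i _ j _ hij
    rcases lt_or_gt_of_ne hij with h | h
    · exact key i j h
    · exact (key j i h).symm
  set SN := {f : C(T, ℝ) | (N : ℝ) + 1 ≤ f t} with hSN
  have hcover : Tev ⊆ (⋃ k ∈ Finset.range K, {ω | 2 ≤ Φ ω (I k)}) ∪ {ω | 2 ≤ Φ ω SN} := by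
    rintro ω ⟨x, hxε, hx2⟩
    rcases lt_or_ge x ((N : ℝ) + 1) with hxN | hxN
    · left
      set k := ⌊(x - ε) / h⌋₊ with hkdef
      have hxε0 : 0 ≤ (x - ε) / h := div_nonneg (by linarith) hhpos.le
      have hKh : (K : ℝ) * h = (N : ℝ) + 1 - ε := by rw [hh]; field_simp
      have hkK : k < K := by
        rw [hkdef, Nat.floor_lt hxε0, div_lt_iff₀ hhpos]
        linarith
      have hfloor_le : (k : ℝ) ≤ (x - ε) / h := Nat.floor_le hxε0
      have hfloor_lt : (x - ε) / h < (k : ℝ) + 1 := Nat.lt_floor_add_one _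
      have hak : a k ≤ x := by
        have h2 : (k : ℝ) * h ≤ x - ε := by
          rw [← le_div_iff₀ hhpos]
          exact hfloor_le
        simp only [ha]; linarith
      have hak1 : x < a (k + 1) := by
        have h2 : x - ε < ((k : ℝ) + 1) * h := by
          rw [div_lt_iff₀ hhpos] at hfloor_lt
          linarith
        simp only [ha]; push_cast; linarith
      refine mem_iUnion₂.2 ⟨k, Finset.mem_range.2 hkK, ?_⟩
      show 2 ≤ Φ ω (I k)
      refine le_trans hx2 (measure_mono ?_)
      intro f hf
      have hfx : f t = x := hf
      exact ⟨by rw [hfx]; exact hak, by rw [hfx]; exact hak1⟩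
    · right
      show 2 ≤ Φ ω SN
      refine le_trans hx2 (measure_mono ?_)
      intro f hf
      have hfx : f t = x := hf
      show (N : ℝ) + 1 ≤ f t
      rw [hfx]; exact hxN
  have hSNfin : μ SN ≠ ⊤ := mu_S_ne_top hμ (by linarith)
  calc P Tev
      ≤ P ((⋃ k ∈ Finset.range K, {ω | 2 ≤ Φ ω (I k)}) ∪ {ω | 2 ≤ Φ ω SN}) :=
        measure_mono hcover
    _ ≤ P (⋃ k ∈ Finset.range K, {ω | 2 ≤ Φ ω (I k)}) + P {ω | 2 ≤ Φ ω SN} :=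
        measure_union_le _ _
    _ ≤ (∑ k ∈ Finset.range K, P {ω | 2 ≤ Φ ω (I k)}) + P {ω | 2 ≤ Φ ω SN} :=
        add_le_add_left (measure_biUnion_finset_le _ _) _
    _ ≤ (∑ k ∈ Finset.range K, μ (I k) * μ (I k)) + μ SN * μ SN :=
        add_le_add (Finset.sum_le_sum fun k _ => pp_ge_two_le_sq hP hMp (hImeas k) (hIfin k))
          (pp_ge_two_le_sq hP hMp (measSet_S t _) hSNfin)
    _ ≤ (∑ k ∈ Finset.range K, ENNReal.ofReal γ * μ (I k)) +
          ENNReal.ofReal b * ENNReal.ofReal b :=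
        add_le_add (Finset.sum_le_sum fun k hk =>
            mul_le_mul' (hIbound k (Finset.mem_range.1 hk)) le_rfl)
          (mul_le_mul' hNb.le hNb.le)
    _ = ENNReal.ofReal γ * (∑ k ∈ Finset.range K, μ (I k)) + ENNReal.ofReal (δ / 2) := by
        rw [← Finset.mul_sum, ← ENNReal.ofReal_mul hbpos.le,
          Real.mul_self_sqrt (by linarith : (0:ℝ) ≤ δ / 2)]
    _ ≤ ENNReal.ofReal γ * μ {f : C(T, ℝ) | ε ≤ f t} + ENNReal.ofReal (δ / 2) := by
        apply add_le_add_left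
        apply mul_le_mul' le_rfl
        rw [← measure_biUnion_finset hIdisj fun k _ => hImeas k]
        exact measure_mono (iUnion₂_subset fun k _ => hIsub k)
    _ ≤ ENNReal.ofReal (δ / 2) + ENNReal.ofReal (δ / 2) := by
        apply add_le_add_left
        rw [← ENNReal.ofReal_toReal hm0fin, ← hm0, ← ENNReal.ofReal_mul hγpos.le]
        apply ENNReal.ofReal_le_ofReal
        rw [hγ]
        have hle1 : m0 / (m0 + 1) ≤ 1 := by
          rw [div_le_one (by linarith)]
          linarith
        calc δ / 2 / (m0 + 1) * m0 = δ / 2 * (m0 / (m0 + 1)) := by ring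
        _ ≤ δ / 2 * 1 := by
            apply mul_le_mul_of_nonneg_left hle1 (by linarith)
        _ = δ / 2 := mul_one _
    _ = ENNReal.ofReal δ := by
        rw [← ENNReal.ofReal_add (by linarith) (by linarith)]
        norm_num

end Helpers9

section Helpers10

variable {T : Type*} [MetricSpace T] [CompactSpace T]
  [MeasurableSpace C(T, ℝ)] [BorelSpace C(T, ℝ)]
  {μ : Measure C(T, ℝ)} {t : T}
  {Ω : Type*} [MeasurableSpace Ω] {P : Measure Ω} [IsProbabilityMeasure P]
  {Φ : Ω → Measure C(T, ℝ)}

lemma disj_D_G (x : ℝ) :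
    Disjoint {f : C(T, ℝ) | f t = x} {f : C(T, ℝ) | x < f t} := by
  rw [Set.disjoint_left]
  intro f hf1 hf2
  have h1 : f t = x := hf1
  have h2 : x < f t := hf2
  linarith

lemma prob_max_eq_pos_zero_iff (hP : IsPoissonPM P Φ μ) (hMp : ∀ ω, IsMp (Φ ω))
    (hμ : ∀ ε : ℝ, 0 < ε → μ {f : C(T, ℝ) | ε < ‖f‖} ≠ ⊤) {x : ℝ} (hx : 0 < x) :
    P {ω | maxM (Φ ω) t = x} = 0 ↔ μ {f : C(T, ℝ) | f t = x} = 0 := by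
  have hDm := measSet_D t x
  have hGm := measSet_G t x
  have hSfin := mu_S_ne_top hμ (t := t) hx
  have hDfin : μ {f : C(T, ℝ) | f t = x} ≠ ⊤ :=
    ne_top_of_le_ne_top hSfin (measure_mono fun f (hf : f t = x) => hf.ge)
  have hGfin : μ {f : C(T, ℝ) | x < f t} ≠ ⊤ :=
    ne_top_of_le_ne_top hSfin (measure_mono fun f (hf : x < f t) => hf.le)
  rw [event_max_eq_pos hMp hx]
  have hrw1 : {ω | Φ ω {f : C(T, ℝ) | f t = x} ≠ 0} =
      {ω | Φ ω {f : C(T, ℝ) | f t = x} ∈ ({0}ᶜ : Set ℝ≥0∞)} := by ext ω; simp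
  have hrw2 : {ω | Φ ω {f : C(T, ℝ) | x < f t} = 0} =
      {ω | Φ ω {f : C(T, ℝ) | x < f t} ∈ ({0} : Set ℝ≥0∞)} := by ext ω; simp
  rw [hrw1, hrw2, pp_indep hP hDm hGm (disj_D_G x) (measurableSet_singleton 0).compl
    (measurableSet_singleton 0), ← hrw2, pp_zero hP hGm hGfin]
  have hcompl : {ω | Φ ω {f : C(T, ℝ) | f t = x} ∈ ({0}ᶜ : Set ℝ≥0∞)} =
      {ω | Φ ω {f : C(T, ℝ) | f t = x} = 0}ᶜ := by ext ω; simp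
  have hm0 : MeasurableSet {ω | Φ ω {f : C(T, ℝ) | f t = x} = 0} := by
    simpa using pp_meas_event hP hDm (measurableSet_singleton 0)
  rw [hcompl, prob_compl_eq_one_sub hm0, pp_zero hP hDm hDfin]
  constructor
  · intro heq
    rcases mul_eq_zero.1 heq with h1 | h1
    · have hle : (1 : ℝ≥0∞) ≤ ENNReal.ofReal (Real.exp (-(μ {f : C(T, ℝ) | f t = x}).toReal)) :=
        tsub_eq_zero_iff_le.1 h1
      rw [ENNReal.one_le_ofReal] at hle
      have hc : (μ {f : C(T, ℝ) | f t = x}).toReal ≤ 0 := by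
        by_contra hc
        push_neg at hc
        have := Real.exp_lt_one_iff.2 (neg_lt_zero.2 hc)
        linarith
      have hc0 : (μ {f : C(T, ℝ) | f t = x}).toReal = 0 :=
        le_antisymm hc ENNReal.toReal_nonneg
      rcases (ENNReal.toReal_eq_zero_iff _).1 hc0 with h | h
      · exact h
      · exact absurd h hDfin
    · exact absurd h1 (ENNReal.ofReal_pos.2 (Real.exp_pos _)).ne'
  · intro h0
    rw [h0]
    simp

lemma prob_max_eq_zero_iff (hP : IsPoissonPM P Φ μ) (hMp : ∀ ω, IsMp (Φ ω))
    (hμ : ∀ ε : ℝ, 0 < ε → μ {f : C(T, ℝ) | ε < ‖f‖} ≠ ⊤)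
    (hnull : μ {f : C(T, ℝ) | f = 0} = 0) :
    P {ω | maxM (Φ ω) t = 0} = 0 ↔ μ {f : C(T, ℝ) | 0 < f t} = ⊤ := by
  rw [event_max_eq_zero hMp]
  constructor
  · intro h
    by_contra hne
    rw [pp_zero hP (measSet_G t 0) hne] at h
    exact (ENNReal.ofReal_pos.2 (Real.exp_pos _)).ne' h
  · intro htop
    refine le_zero_iff.1 (le_trans (measure_mono ?_)
      (pp_infinite hP hMp hμ hnull (measSet_G t 0) htop).le)
    intro ω hω
    have h0 : Φ ω {f : C(T, ℝ) | 0 < f t} = 0 := hω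
    show Φ ω {f : C(T, ℝ) | 0 < f t} ≤ 1
    rw [h0]
    exact zero_le_one

end Helpers10


/-- Proposition 2, equivalences: for `t ∈ T`, with
`μ̄_t(x) = μ {f : f(t) ≥ x}`, the following are equivalent:
(i) `Φ_{{t}}^+(C_0) = 1` a.s.;
(ii) `μ̄_t(0⁺) = ∞` and `μ̄_t` is continuous on `(0,∞)`;
(iii) the law of `η(t)` has no atom. -/
theorem single_point_extremal_equiv {T : Type*} [MetricSpace T] [CompactSpace T]
    [MeasurableSpace C(T, ℝ)] [BorelSpace C(T, ℝ)]
    {Ω : Type*} [MeasurableSpace Ω] (P : Measure Ω) [IsProbabilityMeasure P]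
    (μ : Measure C(T, ℝ)) (hμ : ∀ ε : ℝ, 0 < ε → μ {f : C(T, ℝ) | ε < ‖f‖} ≠ ⊤)
    (hμ0 : ∀ᵐ f ∂μ, 0 ≤ f ∧ f ≠ 0)
    (Φ : Ω → Measure C(T, ℝ)) (hP : IsPoissonPM P Φ μ) (hMp : ∀ ω, IsMp (Φ ω))
    (t : T)
    (μbar : ℝ → ℝ≥0∞) (hμbar : ∀ x, μbar x = μ {f : C(T, ℝ) | x ≤ f t})
    (Φp : Ω → Measure C(T, ℝ))
    (hΦp : ∀ ω, Φp ω = (Φ ω).restrict {f : C(T, ℝ) | maxM (Φ ω) t ≤ f t}) :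
    -- (i) ↔ (ii)
    ((∀ᵐ ω ∂P, Φp ω Set.univ = 1) ↔
      (Filter.Tendsto μbar (nhdsWithin 0 (Set.Ioi 0)) (nhds ⊤) ∧
        ContinuousOn μbar (Set.Ioi 0))) ∧
    -- (i) ↔ (iii)
    ((∀ᵐ ω ∂P, Φp ω Set.univ = 1) ↔
      ∀ x : ℝ, P {ω | maxM (Φ ω) t = x} = 0) := by
  have hμbar' : μbar = fun y => μ {f : C(T, ℝ) | y ≤ f t} := funext hμbar
  have hnull : μ {f : C(T, ℝ) | f = 0} = 0 := by
    have h0 := ae_iff.1 hμ0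
    refine measure_mono_null ?_ h0
    intro f hf
    have hf0 : f = 0 := hf
    simp only [mem_setOf_eq]
    rw [hf0]
    intro hcon
    exact hcon.2 rfl
  -- cond is the measure-theoretic reformulation of (ii)
  have h2 : (Filter.Tendsto μbar (nhdsWithin 0 (Set.Ioi 0)) (nhds ⊤) ∧
      ContinuousOn μbar (Set.Ioi 0)) ↔
      (μ {f : C(T, ℝ) | 0 < f t} = ⊤ ∧
        ∀ x : ℝ, 0 < x → μ {f : C(T, ℝ) | f t = x} = 0) := by
    rw [hμbar']
    exact and_congr (tendsto_top_iff hμ) (contOn_iff_no_atoms hμ)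
  have h3 : (∀ x : ℝ, P {ω | maxM (Φ ω) t = x} = 0) ↔
      (μ {f : C(T, ℝ) | 0 < f t} = ⊤ ∧
        ∀ x : ℝ, 0 < x → μ {f : C(T, ℝ) | f t = x} = 0) := by
    constructor
    · intro hall
      exact ⟨(prob_max_eq_zero_iff hP hMp hμ hnull).1 (hall 0),
        fun x hx => (prob_max_eq_pos_zero_iff hP hMp hμ hx).1 (hall x)⟩
    · rintro ⟨hG0, hD⟩ x
      rcases lt_trichotomy x 0 with hx | hx | hx
      · rw [event_max_neg hMp hx]
        exact measure_empty
      · subst hx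
        exact (prob_max_eq_zero_iff hP hMp hμ hnull).2 hG0
      · exact (prob_max_eq_pos_zero_iff hP hMp hμ hx).2 (hD x hx)
  have h1 : (∀ᵐ ω ∂P, Φp ω Set.univ = 1) ↔
      (μ {f : C(T, ℝ) | 0 < f t} = ⊤ ∧
        ∀ x : ℝ, 0 < x → μ {f : C(T, ℝ) | f t = x} = 0) := by
    constructor
    · intro hi
      have hPbad : P {ω | ¬ Φp ω Set.univ = 1} = 0 := ae_iff.1 hi
      constructor
      · -- μ G0 = ⊤
        by_contra hne
        have hpos1 : 0 < P {ω | Φ ω {f : C(T, ℝ) | 0 < f t} ∈ ({0} : Set ℝ≥0∞)} := by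
          rw [show {ω | Φ ω {f : C(T, ℝ) | 0 < f t} ∈ ({0} : Set ℝ≥0∞)} =
            {ω | Φ ω {f : C(T, ℝ) | 0 < f t} = 0} from by ext ω; simp,
            pp_zero hP (measSet_G t 0) hne]
          exact ENNReal.ofReal_pos.2 (Real.exp_pos _)
        have hpos2 : 0 < P {ω | Φ ω {f : C(T, ℝ) | f t = 0} ∈ ({1}ᶜ : Set ℝ≥0∞)} := by
          have hrw : {ω | Φ ω {f : C(T, ℝ) | f t = 0} ∈ ({1}ᶜ : Set ℝ≥0∞)} =
              {ω | Φ ω {f : C(T, ℝ) | f t = 0} = 1}ᶜ := by ext ω; simp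
          have hm1 : MeasurableSet {ω | Φ ω {f : C(T, ℝ) | f t = 0} = 1} := by
            simpa using pp_meas_event hP (measSet_D t 0) (measurableSet_singleton 1)
          rcases eq_or_ne (μ {f : C(T, ℝ) | f t = 0}) ⊤ with htop | hfin
          · rw [hrw, prob_compl_eq_one_sub hm1]
            have h1 : P {ω | Φ ω {f : C(T, ℝ) | f t = 0} = 1} = 0 := by
              refine le_zero_iff.1 (le_trans (measure_mono ?_)
                (pp_infinite hP hMp hμ hnull (measSet_D t 0) htop).le)
              intro ω hω
              have h1' : Φ ω {f : C(T, ℝ) | f t = 0} = 1 := hω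
              show Φ ω {f : C(T, ℝ) | f t = 0} ≤ 1
              rw [h1']
            rw [h1, tsub_zero]
            norm_num
          · have := pp_ne_one_pos hP (measSet_D t 0) hfin
            rwa [show {ω | Φ ω {f : C(T, ℝ) | f t = 0} ≠ 1} =
              {ω | Φ ω {f : C(T, ℝ) | f t = 0} ∈ ({1}ᶜ : Set ℝ≥0∞)} from by ext ω; simp] at this
        have hdisj : Disjoint {f : C(T, ℝ) | 0 < f t} {f : C(T, ℝ) | f t = 0} := by
          rw [Set.disjoint_left]
          intro f hf1 hf2
          have h1 : (0:ℝ) < f t := hf1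
          have h2 : f t = 0 := hf2
          linarith
        have hPE := pp_indep hP (measSet_G t 0) (measSet_D t 0) hdisj
          (measurableSet_singleton 0) (measurableSet_singleton 1).compl
        have hEbad : {ω | Φ ω {f : C(T, ℝ) | 0 < f t} ∈ ({0} : Set ℝ≥0∞)} ∩
            {ω | Φ ω {f : C(T, ℝ) | f t = 0} ∈ ({1}ᶜ : Set ℝ≥0∞)} ⊆
            {ω | ¬ Φp ω Set.univ = 1} := by
          rintro ω ⟨h0, h1⟩
          have h0' : Φ ω {f : C(T, ℝ) | 0 < f t} = 0 := h0
          have h1' : ¬ Φ ω {f : C(T, ℝ) | f t = 0} = 1 := h1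
          have hmax : maxM (Φ ω) t = 0 := (maxM_eq_zero_iff (hMp ω) t).2 h0'
          show ¬ Φp ω Set.univ = 1
          rw [Phip_univ hΦp ω, hmax, S_decomp (μ := Φ ω) (t := t) 0, h0', add_zero]
          exact h1'
        have hEpos : 0 < P ({ω | Φ ω {f : C(T, ℝ) | 0 < f t} ∈ ({0} : Set ℝ≥0∞)} ∩
            {ω | Φ ω {f : C(T, ℝ) | f t = 0} ∈ ({1}ᶜ : Set ℝ≥0∞)}) := by
          rw [hPE]
          exact ENNReal.mul_pos hpos1.ne' hpos2.ne'
        have := measure_mono (μ := P) hEbad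
        rw [hPbad] at this
        exact absurd (le_zero_iff.1 this) hEpos.ne'
      · -- no atoms of μbar
        intro x hx
        by_contra hcx
        have hSfin := mu_S_ne_top hμ (t := t) hx
        have hDfin : μ {f : C(T, ℝ) | f t = x} ≠ ⊤ :=
          ne_top_of_le_ne_top hSfin (measure_mono fun f (hf : f t = x) => hf.ge)
        have hGfin : μ {f : C(T, ℝ) | x < f t} ≠ ⊤ :=
          ne_top_of_le_ne_top hSfin (measure_mono fun f (hf : x < f t) => hf.le)
        have hpos1 : 0 < P {ω | Φ ω {f : C(T, ℝ) | f t = x} ∈ Ici (2 : ℝ≥0∞)} := by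
          have := pp_ge_two_pos hP hMp (measSet_D t x) hDfin hcx
          rwa [show {ω | 2 ≤ Φ ω {f : C(T, ℝ) | f t = x}} =
            {ω | Φ ω {f : C(T, ℝ) | f t = x} ∈ Ici (2 : ℝ≥0∞)} from rfl] at this
        have hpos2 : 0 < P {ω | Φ ω {f : C(T, ℝ) | x < f t} ∈ ({0} : Set ℝ≥0∞)} := by
          rw [show {ω | Φ ω {f : C(T, ℝ) | x < f t} ∈ ({0} : Set ℝ≥0∞)} =
            {ω | Φ ω {f : C(T, ℝ) | x < f t} = 0} from by ext ω; simp,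
            pp_zero hP (measSet_G t x) hGfin]
          exact ENNReal.ofReal_pos.2 (Real.exp_pos _)
        have hPE := pp_indep hP (measSet_D t x) (measSet_G t x) (disj_D_G x)
          (measurableSet_Ici (a := (2:ℝ≥0∞))) (measurableSet_singleton 0)
        have hEbad : {ω | Φ ω {f : C(T, ℝ) | f t = x} ∈ Ici (2 : ℝ≥0∞)} ∩
            {ω | Φ ω {f : C(T, ℝ) | x < f t} ∈ ({0} : Set ℝ≥0∞)} ⊆
            {ω | ¬ Φp ω Set.univ = 1} := by
          rintro ω ⟨hD2, hg⟩
          have hD2' : (2 : ℝ≥0∞) ≤ Φ ω {f : C(T, ℝ) | f t = x} := hD2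
          have hg' : Φ ω {f : C(T, ℝ) | x < f t} = 0 := hg
          have hDne : Φ ω {f : C(T, ℝ) | f t = x} ≠ 0 := by
            intro hc
            rw [hc] at hD2'
            exact absurd hD2' (by norm_num)
          have hmax : maxM (Φ ω) t = x := by
            have := event_max_eq_pos (t := t) hMp hx
            exact (Set.ext_iff.1 this ω).2 ⟨hDne, hg'⟩
          show ¬ Φp ω Set.univ = 1
          rw [Phip_univ hΦp ω, hmax, S_decomp (μ := Φ ω) (t := t) x, hg', add_zero]
          intro hc
          rw [hc] at hD2'
          exact absurd hD2' (by norm_num)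
        have hEpos : 0 < P ({ω | Φ ω {f : C(T, ℝ) | f t = x} ∈ Ici (2 : ℝ≥0∞)} ∩
            {ω | Φ ω {f : C(T, ℝ) | x < f t} ∈ ({0} : Set ℝ≥0∞)}) := by
          rw [hPE]
          exact ENNReal.mul_pos hpos1.ne' hpos2.ne'
        have := measure_mono (μ := P) hEbad
        rw [hPbad] at this
        exact absurd (le_zero_iff.1 this) hEpos.ne'
    · rintro ⟨hG0, hD⟩
      rw [ae_iff]
      have hsub : {ω | ¬ Φp ω Set.univ = 1} ⊆
          (⋂ n : ℕ, {ω | Φ ω {f : C(T, ℝ) | 1 / (n + 1) ≤ f t} = 0}) ∪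
            ⋃ n : ℕ, {ω | ∃ x : ℝ, 1 / (n + 1 : ℝ) ≤ x ∧
              2 ≤ Φ ω {f : C(T, ℝ) | f t = x}} := by
        intro ω hω
        rcases bad_event_cases hMp hΦp ω hω with hc | ⟨x, hx, h2⟩
        · exact Or.inl (mem_iInter.2 hc)
        · refine Or.inr (mem_iUnion.2 ?_)
          obtain ⟨n, hn⟩ := exists_nat_one_div_lt hx
          exact ⟨n, ⟨x, hn.le, h2⟩⟩
      have hZ0 : P (⋂ n : ℕ, {ω | Φ ω {f : C(T, ℝ) | 1 / (n + 1) ≤ f t} = 0}) = 0 := by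
        have hbound : ∀ n : ℕ,
            P (⋂ n : ℕ, {ω | Φ ω {f : C(T, ℝ) | 1 / (n + 1) ≤ f t} = 0}) ≤
              ENNReal.ofReal (Real.exp (-(μ {f : C(T, ℝ) | 1 / (n + 1) ≤ f t}).toReal)) := by
          intro n
          refine le_trans (measure_mono (iInter_subset _ n)) ?_
          rw [pp_zero hP (measSet_S t _) (mu_S_ne_top hμ (by positivity))]
        have htop : Filter.Tendsto (fun n : ℕ => μ {f : C(T, ℝ) | 1 / (n + 1) ≤ f t})
            Filter.atTop (nhds ⊤) := by
          have := tendsto_mu_S_seq (μ := μ) (t := t) 0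
          simp only [zero_add] at this
          rwa [hG0] at this
        have hmR := toReal_tendsto_atTop htop (fun n => mu_S_ne_top hμ (by positivity))
        have hlim : Filter.Tendsto
            (fun n : ℕ => ENNReal.ofReal
              (Real.exp (-(μ {f : C(T, ℝ) | 1 / (n + 1) ≤ f t}).toReal)))
            Filter.atTop (nhds 0) := by
          rw [← ENNReal.ofReal_zero]
          exact ENNReal.tendsto_ofReal
            (Real.tendsto_exp_atBot.comp (Filter.tendsto_neg_atTop_atBot.comp hmR))
        exact le_zero_iff.1 (ge_of_tendsto' hlim hbound)
      have hT0 : ∀ n : ℕ, P {ω | ∃ x : ℝ, 1 / (n + 1 : ℝ) ≤ x ∧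
          2 ≤ Φ ω {f : C(T, ℝ) | f t = x}} = 0 :=
        fun n => tie_null hP hMp hμ hD (by positivity)
      have hU0 : P (⋃ n : ℕ, {ω | ∃ x : ℝ, 1 / (n + 1 : ℝ) ≤ x ∧
          2 ≤ Φ ω {f : C(T, ℝ) | f t = x}}) = 0 := by
        refine le_zero_iff.1 (le_trans (measure_iUnion_le _) (le_of_eq ?_))
        simp only [hT0]
        exact tsum_zero
      refine le_zero_iff.1 ?_
      calc P {ω | ¬ Φp ω Set.univ = 1} ≤
          P ((⋂ n : ℕ, {ω | Φ ω {f : C(T, ℝ) | 1 / (n + 1) ≤ f t} = 0}) ∪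
            ⋃ n : ℕ, {ω | ∃ x : ℝ, 1 / (n + 1 : ℝ) ≤ x ∧
              2 ≤ Φ ω {f : C(T, ℝ) | f t = x}}) := measure_mono hsub
      _ ≤ P (⋂ n : ℕ, {ω | Φ ω {f : C(T, ℝ) | 1 / (n + 1) ≤ f t} = 0}) +
            P (⋃ n : ℕ, {ω | ∃ x : ℝ, 1 / (n + 1 : ℝ) ≤ x ∧
              2 ≤ Φ ω {f : C(T, ℝ) | f t = x}}) := measure_union_le _ _
      _ = 0 := by rw [hZ0, hU0, add_zero]
  exact ⟨h1.trans h2.symm, h1.trans h3.symm⟩
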